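/- Let A, B ∈ M₅(ℝ) be defined in the standard basis e₁,…,e₅ by A = diag(−2,−1,−1,0,0) and B·e₁ = 2e₂, B·e₂ = e₄, B·e₃ = 2e₅, B·e₄ = B·e₅ = 0, and let W₀ = span(e₂,e₃,e₄,e₅) (which is invariant under both A and B). Then for every ℝ-linear endomorphism J₀ of span(e₂,e₃) with J₀∘J₀ = −id, there exists a unique ℝ-linear endomorphism J of W₀ such that J∘J = −id, J commutes with the restrictions of A and B to W₀, and J restricts to J₀ on span(e₂,e₃). (Hence the invariant complex structures on W₀ form a family parametrized exactly by the complex structures on span(e₂,e₃): J on span(e₂,e₃) determines J on span(e₄,e₅).) -/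
import Mathlib


open Matrix

/-- `A = diag(−2,−1,−1,0,0)`. -/
def Amat : Matrix (Fin 5) (Fin 5) ℝ := Matrix.diagonal ![-2, -1, -1, 0, 0]

/-- `B` with `B·e₁ = 2e₂`, `B·e₂ = e₄`, `B·e₃ = 2e₅`, `B·e₄ = B·e₅ = 0`. -/
def Bmat : Matrix (Fin 5) (Fin 5) ℝ :=
  !![0, 0, 0, 0, 0;
     2, 0, 0, 0, 0;
     0, 0, 0, 0, 0;
     0, 1, 0, 0, 0;
     0, 0, 2, 0, 0]

/-- `W₀ = span(e₂,e₃,e₄,e₅)`. -/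
noncomputable def W0 : Submodule ℝ (Fin 5 → ℝ) :=
  Submodule.span ℝ {(Pi.single 1 1 : Fin 5 → ℝ), Pi.single 2 1,
    Pi.single 3 1, Pi.single 4 1}

/-- `span(e₂,e₃)`. -/
noncomputable def V23 : Submodule ℝ (Fin 5 → ℝ) :=
  Submodule.span ℝ {(Pi.single 1 1 : Fin 5 → ℝ), Pi.single 2 1}

/- ### Auxiliary lemmas -/


/-- The candidate matrix for the extension `J`. -/
noncomputable def JmAux (a b c d : ℝ) : Matrix (Fin 5) (Fin 5) ℝ :=
  !![0, 0, 0, 0, 0;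
     0, a, c, 0, 0;
     0, b, d, 0, 0;
     0, 0, 0, a, c/2;
     0, 0, 0, 2*b, d]

lemma repr_of_zeroAux {x : Fin 5 → ℝ} (hx : x 0 = 0) :
    x = x 1 • (Pi.single 1 1 : Fin 5 → ℝ) + x 2 • (Pi.single 2 1 : Fin 5 → ℝ)
      + x 3 • (Pi.single 3 1 : Fin 5 → ℝ) + x 4 • (Pi.single 4 1 : Fin 5 → ℝ) := by
  funext i
  fin_cases i <;> simp [Pi.single_apply, hx]

lemma mem_W0_iffAux (x : Fin 5 → ℝ) : x ∈ W0 ↔ x 0 = 0 := by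
  constructor
  · intro hx
    have : W0 ≤ LinearMap.ker (LinearMap.proj 0 : (Fin 5 → ℝ) →ₗ[ℝ] ℝ) := by
      rw [W0, Submodule.span_le]
      intro y hy
      simp only [Set.mem_insert_iff, Set.mem_singleton_iff] at hy
      rcases hy with rfl | rfl | rfl | rfl <;> simp [Pi.single_apply]
    simpa using this hx
  · intro hx
    rw [repr_of_zeroAux hx]
    refine Submodule.add_mem _ (Submodule.add_mem _ (Submodule.add_mem _ ?_ ?_) ?_) ?_ <;>
      exact Submodule.smul_mem _ _ (Submodule.subset_span (by simp))

lemma V23_reprAux {x : Fin 5 → ℝ} (hx : x ∈ V23) :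
    x = x 1 • (Pi.single 1 1 : Fin 5 → ℝ) + x 2 • (Pi.single 2 1 : Fin 5 → ℝ) := by
  set L : (Fin 5 → ℝ) →ₗ[ℝ] (Fin 5 → ℝ) :=
    (LinearMap.proj 1 : (Fin 5 → ℝ) →ₗ[ℝ] ℝ).smulRight (Pi.single 1 1)
      + (LinearMap.proj 2 : (Fin 5 → ℝ) →ₗ[ℝ] ℝ).smulRight (Pi.single 2 1) with hL
  have hle : V23 ≤ LinearMap.ker (LinearMap.id - L) := by
    rw [V23, Submodule.span_le]
    intro y hy
    simp only [Set.mem_insert_iff, Set.mem_singleton_iff] at hy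
    rcases hy with rfl | rfl <;>
    · simp only [LinearMap.mem_ker, LinearMap.sub_apply, LinearMap.id_apply, hL,
        LinearMap.add_apply, LinearMap.coe_smulRight, LinearMap.proj_apply]
      funext i
      fin_cases i <;> simp [Pi.single_apply]
  have h := hle hx
  simp only [LinearMap.mem_ker, LinearMap.sub_apply, LinearMap.id_apply, hL,
    LinearMap.add_apply, LinearMap.coe_smulRight, LinearMap.proj_apply, sub_eq_zero] at h
  exact h

lemma JmAux_sq (a b c d : ℝ) (h11 : a*a+b*c = -1) (h12 : a*b+b*d = 0)
    (h21 : c*a+d*c = 0) (h22 : c*b+d*d = -1)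
    (x : Fin 5 → ℝ) (hx : x 0 = 0) :
    (JmAux a b c d).mulVec ((JmAux a b c d).mulVec x) = -x := by
  funext i
  fin_cases i <;>
    simp [JmAux, Matrix.mulVec, dotProduct, Fin.sum_univ_five,
      Matrix.vecHead, Matrix.vecTail, hx]
  · linear_combination (x 1) * h11 + (x 2) * h21
  · linear_combination (x 1) * h12 + (x 2) * h22
  · linear_combination (x 3) * h11 + (x 4) * h21 / 2
  · linear_combination (x 3) * 2 * h12 + (x 4) * h22

lemma JmAux_commA (a b c d : ℝ) (x : Fin 5 → ℝ) :
    (JmAux a b c d).mulVec (Amat.mulVec x) = Amat.mulVec ((JmAux a b c d).mulVec x) := by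
  funext i
  fin_cases i <;>
    simp [JmAux, Amat, Matrix.mulVec, dotProduct, Fin.sum_univ_five,
      Matrix.vecHead, Matrix.vecTail, Matrix.diagonal] <;> ring

lemma JmAux_commB (a b c d : ℝ) (x : Fin 5 → ℝ) (hx : x 0 = 0) :
    (JmAux a b c d).mulVec (Bmat.mulVec x) = Bmat.mulVec ((JmAux a b c d).mulVec x) := by
  funext i
  fin_cases i <;>
    simp [JmAux, Bmat, Matrix.mulVec, dotProduct, Fin.sum_univ_five,
      Matrix.vecHead, Matrix.vecTail, hx] <;> ring

/-- On the invariant subspace `W₀ = span(e₂,e₃,e₄,e₅)`, every complex structure `J₀`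
on `span(e₂,e₃)` extends uniquely to a complex structure `J` on `W₀` commuting with
the restrictions of `A` and `B`: the invariant complex structures on `W₀` are exactly
parametrized by the complex structures on `span(e₂,e₃)`. -/
theorem unique_invariant_complex_structure_extension
    (hA : ∀ x ∈ W0, Amat.mulVec x ∈ W0)
    (hB : ∀ x ∈ W0, Bmat.mulVec x ∈ W0)
    (J0 : V23 →ₗ[ℝ] V23) (hJ0 : ∀ x, J0 (J0 x) = -x) :
    ∃! J : W0 →ₗ[ℝ] W0,
      (∀ x, J (J x) = -x) ∧
      (∀ x : W0, ((J ⟨Amat.mulVec (x : Fin 5 → ℝ), hA _ x.2⟩ : W0) : Fin 5 → ℝ)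
          = Amat.mulVec ((J x : W0) : Fin 5 → ℝ)) ∧
      (∀ x : W0, ((J ⟨Bmat.mulVec (x : Fin 5 → ℝ), hB _ x.2⟩ : W0) : Fin 5 → ℝ)
          = Bmat.mulVec ((J x : W0) : Fin 5 → ℝ)) ∧
      (∀ (x : Fin 5 → ℝ) (h2 : x ∈ V23) (h0 : x ∈ W0),
          ((J ⟨x, h0⟩ : W0) : Fin 5 → ℝ) = ((J0 ⟨x, h2⟩ : V23) : Fin 5 → ℝ)) := by
  
  classical
  have hp1V : (Pi.single 1 1 : Fin 5 → ℝ) ∈ V23 := Submodule.subset_span (by simp)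
  have hp2V : (Pi.single 2 1 : Fin 5 → ℝ) ∈ V23 := Submodule.subset_span (by simp)
  obtain ⟨u, hu_def⟩ : ∃ w : Fin 5 → ℝ,
      ((J0 (⟨Pi.single 1 1, hp1V⟩ : V23) : V23) : Fin 5 → ℝ) = w := ⟨_, rfl⟩
  obtain ⟨v, hv_def⟩ : ∃ w : Fin 5 → ℝ,
      ((J0 (⟨Pi.single 2 1, hp2V⟩ : V23) : V23) : Fin 5 → ℝ) = w := ⟨_, rfl⟩
  have hu : u = u 1 • (Pi.single 1 1 : Fin 5 → ℝ) + u 2 • (Pi.single 2 1 : Fin 5 → ℝ) := by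
    rw [← hu_def]; exact V23_reprAux (J0 (⟨Pi.single 1 1, hp1V⟩ : V23)).2
  have hv : v = v 1 • (Pi.single 1 1 : Fin 5 → ℝ) + v 2 • (Pi.single 2 1 : Fin 5 → ℝ) := by
    rw [← hv_def]; exact V23_reprAux (J0 (⟨Pi.single 2 1, hp2V⟩ : V23)).2
  have hu0 : u 0 = 0 := by have := congrFun hu 0; simpa [Pi.single_apply] using this
  have hu3 : u 3 = 0 := by have := congrFun hu 3; simpa [Pi.single_apply] using this
  have hu4 : u 4 = 0 := by have := congrFun hu 4; simpa [Pi.single_apply] using this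
  have hv0 : v 0 = 0 := by have := congrFun hv 0; simpa [Pi.single_apply] using this
  have hv3 : v 3 = 0 := by have := congrFun hv 3; simpa [Pi.single_apply] using this
  have hv4 : v 4 = 0 := by have := congrFun hv 4; simpa [Pi.single_apply] using this
  -- J0 on the basis of V23
  have hJe2 : J0 (⟨Pi.single 1 1, hp1V⟩ : V23)
      = u 1 • (⟨Pi.single 1 1, hp1V⟩ : V23) + u 2 • (⟨Pi.single 2 1, hp2V⟩ : V23) := by
    apply Subtype.ext
    simp only [Submodule.coe_add, SetLike.val_smul]
    rw [hu_def]; exact hu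
  have hJe3 : J0 (⟨Pi.single 2 1, hp2V⟩ : V23)
      = v 1 • (⟨Pi.single 1 1, hp1V⟩ : V23) + v 2 • (⟨Pi.single 2 1, hp2V⟩ : V23) := by
    apply Subtype.ext
    simp only [Submodule.coe_add, SetLike.val_smul]
    rw [hv_def]; exact hv
  -- relations from J0² = −1
  have hsq2 : u 1 • u + u 2 • v = -(Pi.single 1 1 : Fin 5 → ℝ) := by
    have h := hJ0 (⟨Pi.single 1 1, hp1V⟩ : V23)
    rw [hJe2, map_add, LinearMap.map_smul, LinearMap.map_smul] at h
    have h' := congrArg (fun z : V23 => (z : Fin 5 → ℝ)) h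
    simpa [hu_def, hv_def] using h'
  have hsq3 : v 1 • u + v 2 • v = -(Pi.single 2 1 : Fin 5 → ℝ) := by
    have h := hJ0 (⟨Pi.single 2 1, hp2V⟩ : V23)
    rw [hJe3, map_add, LinearMap.map_smul, LinearMap.map_smul] at h
    have h' := congrArg (fun z : V23 => (z : Fin 5 → ℝ)) h
    simpa [hu_def, hv_def] using h'
  have h11 : u 1 * u 1 + u 2 * v 1 = -1 := by
    have := congrFun hsq2 1; simpa [Pi.single_apply] using this
  have h12 : u 1 * u 2 + u 2 * v 2 = 0 := by
    have := congrFun hsq2 2; simpa [Pi.single_apply] using this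
  have h21 : v 1 * u 1 + v 2 * v 1 = 0 := by
    have := congrFun hsq3 1; simpa [Pi.single_apply] using this
  have h22 : v 1 * u 2 + v 2 * v 2 = -1 := by
    have := congrFun hsq3 2; simpa [Pi.single_apply] using this
  -- the candidate matrix preserves W0
  have hMW : ∀ z ∈ W0, (JmAux (u 1) (u 2) (v 1) (v 2)).mulVecLin z ∈ W0 := by
    intro z hz
    rw [mem_W0_iffAux]
    simp [JmAux, Matrix.mulVecLin, Matrix.mulVec, dotProduct, Fin.sum_univ_five,
      Matrix.vecHead, Matrix.vecTail]
  have hJcoe : ∀ z : W0,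
      ((((Matrix.mulVecLin (JmAux (u 1) (u 2) (v 1) (v 2))).restrict hMW) z : W0) : Fin 5 → ℝ)
        = (JmAux (u 1) (u 2) (v 1) (v 2)).mulVec z := fun z => rfl
  -- key membership facts for the basis of W0
  have hmem1 : (Pi.single 1 1 : Fin 5 → ℝ) ∈ W0 := by
    rw [mem_W0_iffAux]; simp [Pi.single_apply]
  have hmem2 : (Pi.single 2 1 : Fin 5 → ℝ) ∈ W0 := by
    rw [mem_W0_iffAux]; simp [Pi.single_apply]
  have hmem3 : (Pi.single 3 1 : Fin 5 → ℝ) ∈ W0 := by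
    rw [mem_W0_iffAux]; simp [Pi.single_apply]
  have hmem4 : (Pi.single 4 1 : Fin 5 → ℝ) ∈ W0 := by
    rw [mem_W0_iffAux]; simp [Pi.single_apply]
  -- values of the candidate matrix on the basis
  have hJ2 : (JmAux (u 1) (u 2) (v 1) (v 2)).mulVec (Pi.single 1 1 : Fin 5 → ℝ) = u := by
    funext i
    fin_cases i <;> simp [JmAux, Matrix.mulVec, dotProduct, Fin.sum_univ_five,
      Matrix.vecHead, Matrix.vecTail, Pi.single_apply, hu0, hu3, hu4]
  have hJ3 : (JmAux (u 1) (u 2) (v 1) (v 2)).mulVec (Pi.single 2 1 : Fin 5 → ℝ) = v := by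
    funext i
    fin_cases i <;> simp [JmAux, Matrix.mulVec, dotProduct, Fin.sum_univ_five,
      Matrix.vecHead, Matrix.vecTail, Pi.single_apply, hv0, hv3, hv4]
  have hJ4 : (JmAux (u 1) (u 2) (v 1) (v 2)).mulVec (Pi.single 3 1 : Fin 5 → ℝ)
      = Bmat.mulVec u := by
    funext i
    fin_cases i <;> simp [JmAux, Bmat, Matrix.mulVec, dotProduct, Fin.sum_univ_five,
      Matrix.vecHead, Matrix.vecTail, Pi.single_apply, hu0]
  have hJ5 : (JmAux (u 1) (u 2) (v 1) (v 2)).mulVec (Pi.single 4 1 : Fin 5 → ℝ)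
      = (2:ℝ)⁻¹ • Bmat.mulVec v := by
    funext i
    fin_cases i <;> simp [JmAux, Bmat, Matrix.mulVec, dotProduct, Fin.sum_univ_five,
      Matrix.vecHead, Matrix.vecTail, Pi.single_apply, hv0] <;> ring
  refine ⟨(Matrix.mulVecLin (JmAux (u 1) (u 2) (v 1) (v 2))).restrict hMW, ⟨?_, ?_, ?_, ?_⟩, ?_⟩
  · -- J² = −1
    intro x
    apply Subtype.ext
    rw [hJcoe, hJcoe]
    have : ((-x : W0) : Fin 5 → ℝ) = -(x : Fin 5 → ℝ) := rfl
    rw [this]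
    exact JmAux_sq _ _ _ _ h11 h12 h21 h22 _ ((mem_W0_iffAux _).1 x.2)
  · -- commutes with A
    intro x
    rw [hJcoe, hJcoe]
    exact JmAux_commA _ _ _ _ _
  · -- commutes with B
    intro x
    rw [hJcoe, hJcoe]
    exact JmAux_commB _ _ _ _ _ ((mem_W0_iffAux _).1 x.2)
  · -- restricts to J0 on V23
    intro x h2 h0
    rw [hJcoe]
    have hx : x = x 1 • (Pi.single 1 1 : Fin 5 → ℝ) + x 2 • (Pi.single 2 1 : Fin 5 → ℝ) :=
      V23_reprAux h2
    have hx0 : x 0 = 0 := by have := congrFun hx 0; simpa [Pi.single_apply] using this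
    have hx3 : x 3 = 0 := by have := congrFun hx 3; simpa [Pi.single_apply] using this
    have hx4 : x 4 = 0 := by have := congrFun hx 4; simpa [Pi.single_apply] using this
    have he : (⟨x, h2⟩ : V23)
        = x 1 • (⟨Pi.single 1 1, hp1V⟩ : V23) + x 2 • (⟨Pi.single 2 1, hp2V⟩ : V23) := by
      apply Subtype.ext
      simp only [Submodule.coe_add, SetLike.val_smul]
      exact hx
    rw [he, map_add, LinearMap.map_smul, LinearMap.map_smul]
    have hco : ((x 1 • J0 (⟨Pi.single 1 1, hp1V⟩ : V23)
        + x 2 • J0 (⟨Pi.single 2 1, hp2V⟩ : V23) : V23) : Fin 5 → ℝ)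
        = x 1 • u + x 2 • v := by
      simp only [Submodule.coe_add, SetLike.val_smul, hu_def, hv_def]
    rw [hco]
    funext i
    fin_cases i <;> simp [JmAux, Matrix.mulVec, dotProduct, Fin.sum_univ_five,
      Matrix.vecHead, Matrix.vecTail, hx0, hx3, hx4, hu0, hu3, hu4, hv0, hv3, hv4] <;> ring
  · -- uniqueness
    intro K hK
    obtain ⟨hK1, hK2, hK3, hK4⟩ := hK
    apply LinearMap.ext
    -- values of K on the basis
    have hKE2 : ((K ⟨Pi.single 1 1, hmem1⟩ : W0) : Fin 5 → ℝ) = u := by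
      have h := hK4 (Pi.single 1 1) hp1V hmem1
      rw [h, hu_def]
    have hKE3 : ((K ⟨Pi.single 2 1, hmem2⟩ : W0) : Fin 5 → ℝ) = v := by
      have h := hK4 (Pi.single 2 1) hp2V hmem2
      rw [h, hv_def]
    have hBp1 : Bmat.mulVec (Pi.single 1 1 : Fin 5 → ℝ) = Pi.single 3 1 := by
      funext i
      fin_cases i <;> simp [Bmat, Matrix.mulVec, dotProduct, Fin.sum_univ_five,
        Matrix.vecHead, Matrix.vecTail, Pi.single_apply]
    have hBp2 : Bmat.mulVec (Pi.single 2 1 : Fin 5 → ℝ) = (2:ℝ) • (Pi.single 4 1 : Fin 5 → ℝ) := by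
      funext i
      fin_cases i <;> simp [Bmat, Matrix.mulVec, dotProduct, Fin.sum_univ_five,
        Matrix.vecHead, Matrix.vecTail, Pi.single_apply]
    have hKE4 : ((K ⟨Pi.single 3 1, hmem3⟩ : W0) : Fin 5 → ℝ) = Bmat.mulVec u := by
      have h := hK3 ⟨Pi.single 1 1, hmem1⟩
      rw [hKE2] at h
      have e : (⟨Bmat.mulVec (Pi.single 1 1 : Fin 5 → ℝ),
          hB _ hmem1⟩ : W0) = ⟨Pi.single 3 1, hmem3⟩ := Subtype.ext hBp1
      rw [e] at h
      exact h
    have hKE5 : ((K ⟨Pi.single 4 1, hmem4⟩ : W0) : Fin 5 → ℝ) = (2:ℝ)⁻¹ • Bmat.mulVec v := by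
      have h := hK3 ⟨Pi.single 2 1, hmem2⟩
      rw [hKE3] at h
      have e : (⟨Bmat.mulVec (Pi.single 2 1 : Fin 5 → ℝ),
          hB _ hmem2⟩ : W0) = (2:ℝ) • (⟨Pi.single 4 1, hmem4⟩ : W0) :=
        Subtype.ext (by simpa using hBp2)
      rw [e, LinearMap.map_smul] at h
      have h' : (2:ℝ) • ((K ⟨Pi.single 4 1, hmem4⟩ : W0) : Fin 5 → ℝ) = Bmat.mulVec v := by
        simpa using h
      rw [← h', smul_smul]
      norm_num
    -- K agrees with J on the basis
    have k2 : K ⟨Pi.single 1 1, hmem1⟩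
        = ((Matrix.mulVecLin (JmAux (u 1) (u 2) (v 1) (v 2))).restrict hMW)
            ⟨Pi.single 1 1, hmem1⟩ :=
      Subtype.ext (by rw [hKE2, hJcoe, hJ2])
    have k3 : K ⟨Pi.single 2 1, hmem2⟩
        = ((Matrix.mulVecLin (JmAux (u 1) (u 2) (v 1) (v 2))).restrict hMW)
            ⟨Pi.single 2 1, hmem2⟩ :=
      Subtype.ext (by rw [hKE3, hJcoe, hJ3])
    have k4 : K ⟨Pi.single 3 1, hmem3⟩
        = ((Matrix.mulVecLin (JmAux (u 1) (u 2) (v 1) (v 2))).restrict hMW)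
            ⟨Pi.single 3 1, hmem3⟩ :=
      Subtype.ext (by rw [hKE4, hJcoe, hJ4])
    have k5 : K ⟨Pi.single 4 1, hmem4⟩
        = ((Matrix.mulVecLin (JmAux (u 1) (u 2) (v 1) (v 2))).restrict hMW)
            ⟨Pi.single 4 1, hmem4⟩ :=
      Subtype.ext (by rw [hKE5, hJcoe, hJ5])
    intro x
    have hx0 : (x : Fin 5 → ℝ) 0 = 0 := (mem_W0_iffAux _).1 x.2
    have hxv := repr_of_zeroAux hx0
    have hxW : x = ((x : Fin 5 → ℝ) 1) • (⟨Pi.single 1 1, hmem1⟩ : W0)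
        + ((x : Fin 5 → ℝ) 2) • (⟨Pi.single 2 1, hmem2⟩ : W0)
        + ((x : Fin 5 → ℝ) 3) • (⟨Pi.single 3 1, hmem3⟩ : W0)
        + ((x : Fin 5 → ℝ) 4) • (⟨Pi.single 4 1, hmem4⟩ : W0) := by
      apply Subtype.ext
      simp only [Submodule.coe_add, SetLike.val_smul]
      exact hxv
    rw [hxW]
    simp only [map_add, LinearMap.map_smul, k2, k3, k4, k5]
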